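/- Let K be a field of characteristic zero, a, b ∈ lie_n, and d, e tangential derivations of lie_n. Then in the Lie algebra of derivations of lie_{n+1}: ⁅λ(a) + d⁺, λ(b) + e⁺⁆ = λ([a, b] + d(b) − e(a)) + (⁅d, e⁆)⁺. Moreover, the map (a, d) ↦ λ(a) + d⁺ is injective: if a ∈ lie_n and w is any derivation of lie_n with λ(a) + w⁺ = 0, then a = 0 and w = 0. -/

import Mathlib

open FreeLieAlgebra

section

variable (K : Type) [Field K] [CharZero K]

/-- `lieF K n` is the free Lie algebra over `K` on `x_1, …, x_n` (indexed by `Fin n`);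
`lieF K (n+1)` is the free Lie algebra on `x_0, x_1, …, x_n`, where the generator `x_0`
is indexed by `0 : Fin (n+1)` and `x_k` (for `1 ≤ k ≤ n`) by `k.succ` with `k : Fin n`. -/
abbrev lieF (N : ℕ) : Type := FreeLieAlgebra K (Fin N)

/-- The Lie algebra of derivations of `lieF K N`. -/
abbrev DerL (N : ℕ) : Type := LieDerivation K (lieF K N) (lieF K N)

/-- The Lie algebra embedding `s : lie_n → lie_{n+1}`, `x_k ↦ x_k` for `1 ≤ k ≤ n`. -/
noncomputable def sMap (n : ℕ) : lieF K n →ₗ⁅K⁆ lieF K (n + 1) :=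
  FreeLieAlgebra.lift K fun k : Fin n => FreeLieAlgebra.of K k.succ

/-- The generator `x_0` of `lie_{n+1}`. -/
noncomputable def x0 (n : ℕ) : lieF K (n + 1) := FreeLieAlgebra.of K (0 : Fin (n + 1))

end


namespace FLAux

attribute [local instance] LieRing.ofAssociativeRing

variable (K : Type) [Field K] [CharZero K] (X : Type)

/-- The generators Lie-generate the free Lie algebra. -/
theorem lieSpan_top :
    LieSubalgebra.lieSpan K (FreeLieAlgebra K X) (Set.range (FreeLieAlgebra.of K)) = ⊤ := by
  rw [eq_top_iff]
  intro x _
  set S := LieSubalgebra.lieSpan K (FreeLieAlgebra K X) (Set.range (FreeLieAlgebra.of K)) with hS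
  let g : FreeLieAlgebra K X →ₗ⁅K⁆ S :=
    FreeLieAlgebra.lift K fun i => ⟨FreeLieAlgebra.of K i,
      LieSubalgebra.subset_lieSpan (Set.mem_range_self i)⟩
  have h : S.incl.comp g = LieHom.id := by
    apply FreeLieAlgebra.hom_ext
    intro i
    simp [g, FreeLieAlgebra.lift_of_apply]
  have hx : S.incl (g x) = x := by
    have := DFunLike.congr_fun h x
    simpa using this
  rw [← hx]
  exact (g x).2

/-- Induction principle for the free Lie algebra. -/
theorem induction {p : FreeLieAlgebra K X → Prop}
    (h_of : ∀ i, p (FreeLieAlgebra.of K i))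
    (h_zero : p 0)
    (h_add : ∀ x y, p x → p y → p (x + y))
    (h_smul : ∀ (c : K) (x), p x → p (c • x))
    (h_lie : ∀ x y, p x → p y → p ⁅x, y⁆)
    (x : FreeLieAlgebra K X) : p x := by
  let S : LieSubalgebra K (FreeLieAlgebra K X) :=
    { carrier := {y | p y}
      add_mem' := fun ha hb => h_add _ _ ha hb
      zero_mem' := h_zero
      smul_mem' := fun c y hy => h_smul c y hy
      lie_mem' := fun ha hb => h_lie _ _ ha hb }
  have hle : (⊤ : LieSubalgebra K (FreeLieAlgebra K X)) ≤ S := by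
    rw [← lieSpan_top K X]
    exact LieSubalgebra.lieSpan_le.mpr (by rintro _ ⟨i, rfl⟩; exact h_of i)
  exact hle (LieSubalgebra.mem_top x)

/-- Shorthand for the monoid algebra on the free monoid (i.e. free associative algebra). -/
abbrev B : Type := MonoidAlgebra K (FreeMonoid X)

/-- Right-normed bracketing of a word. -/
noncomputable def deltaL : List X → FreeLieAlgebra K X
  | [] => 0
  | [i] => FreeLieAlgebra.of K i
  | i :: j :: l => ⁅FreeLieAlgebra.of K i, deltaL (j :: l)⁆

lemma deltaL_cons (i : X) (l : List X) (h : l ≠ []) :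
    deltaL K X (i :: l) = ⁅FreeLieAlgebra.of K i, deltaL K X l⁆ := by
  cases l with
  | nil => exact absurd rfl h
  | cons j t => rfl

/-- Dynkin map on words. -/
noncomputable def delta (w : FreeMonoid X) : FreeLieAlgebra K X := deltaL K X w.toList

/-- Dynkin map, linearly extended. -/
noncomputable def phi : B K X →ₗ[K] FreeLieAlgebra K X :=
  (Finsupp.linearCombination K (delta K X)).comp (MonoidAlgebra.coeffLinearEquiv K).toLinearMap

/-- Dynkin map weighted by inverse word length. -/
noncomputable def Phi : B K X →ₗ[K] FreeLieAlgebra K X :=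
  (Finsupp.linearCombination K (fun w => ((FreeMonoid.length w : K))⁻¹ • delta K X w)).comp
    (MonoidAlgebra.coeffLinearEquiv K).toLinearMap

/-- Canonical Lie algebra map to the free associative algebra. -/
noncomputable def tau : FreeLieAlgebra K X →ₗ⁅K⁆ B K X :=
  FreeLieAlgebra.lift K fun i => MonoidAlgebra.single (FreeMonoid.of i) 1

lemma phi_single (w : FreeMonoid X) (c : K) :
    phi K X (MonoidAlgebra.single w c) = c • delta K X w :=
  Finsupp.linearCombination_single K (v := delta K X) c w

lemma Phi_single (w : FreeMonoid X) (c : K) :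
    Phi K X (MonoidAlgebra.single w c) = c • ((FreeMonoid.length w : K))⁻¹ • delta K X w :=
  Finsupp.linearCombination_single K (v := fun w => ((FreeMonoid.length w : K))⁻¹ • delta K X w) c w

/-- Span of nonempty words. -/
noncomputable def W : Submodule K (B K X) :=
  Submodule.span K {x | ∃ (w : FreeMonoid X) (c : K), w ≠ 1 ∧ x = MonoidAlgebra.single w c}

lemma mul_ne_one {w' w : FreeMonoid X} (h : w ≠ 1) : w' * w ≠ 1 := by
  intro hc
  apply h
  have := congrArg FreeMonoid.length hc
  rw [FreeMonoid.length_mul] at this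
  simp only [FreeMonoid.length_one] at this
  exact FreeMonoid.length_eq_zero.mp (by omega)

lemma mul_mem_W (x : B K X) {v : B K X} (hv : v ∈ W K X) : x * v ∈ W K X := by
  refine Submodule.span_induction ?_ ?_ ?_ ?_ hv
  · rintro y ⟨w, c, hw, rfl⟩
    induction x using MonoidAlgebra.induction_linear with
    | zero => simpa using (W K X).zero_mem
    | add f g hf hg => rw [add_mul]; exact add_mem hf hg
    | single w' c' =>
        rw [MonoidAlgebra.single_mul_single]
        exact Submodule.subset_span ⟨w' * w, c' * c, mul_ne_one X hw, rfl⟩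
  · simpa using (W K X).zero_mem
  · intro a b _ _ ha hb
    rw [mul_add]; exact add_mem ha hb
  · intro c a _ ha
    rw [mul_smul_comm]; exact Submodule.smul_mem _ _ ha

lemma tau_mem_W (u : FreeLieAlgebra K X) : tau K X u ∈ W K X := by
  induction u using FLAux.induction with
  | h_of i =>
      rw [tau, FreeLieAlgebra.lift_of_apply]
      refine Submodule.subset_span ⟨FreeMonoid.of i, 1, ?_, rfl⟩
      intro hc
      simpa using congrArg FreeMonoid.length hc
  | h_zero => simpa using (W K X).zero_mem
  | h_add x y hx hy => rw [map_add]; exact add_mem hx hy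
  | h_smul c x hx => rw [map_smul]; exact Submodule.smul_mem _ _ hx
  | h_lie x y hx hy =>
      rw [LieHom.map_lie, Ring.lie_def]
      exact sub_mem (mul_mem_W K X _ hy) (mul_mem_W K X _ hx)

lemma coeff_one_eq_zero {v : B K X} (hv : v ∈ W K X) : v.coeff 1 = 0 := by
  refine Submodule.span_induction ?_ ?_ ?_ ?_ hv
  · rintro y ⟨w, c, hw, rfl⟩
    exact Finsupp.single_eq_of_ne' hw
  · rfl
  · intro a b _ _ ha hb
    rw [MonoidAlgebra.coeff_add, Finsupp.add_apply, ha, hb, add_zero]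
  · intro c a _ ha
    rw [MonoidAlgebra.coeff_smul, Finsupp.smul_apply, ha, smul_zero]

lemma phi_tau_mul (u : FreeLieAlgebra K X) :
    ∀ v ∈ W K X, phi K X (tau K X u * v) = ⁅u, phi K X v⁆ := by
  induction u using FLAux.induction with
  | h_of i =>
      intro v hv
      refine Submodule.span_induction ?_ ?_ ?_ ?_ hv
      · rintro y ⟨w, c, hw, rfl⟩
        rw [tau, FreeLieAlgebra.lift_of_apply, MonoidAlgebra.single_mul_single, one_mul,
          phi_single, phi_single]
        have htl : (FreeMonoid.of i * w).toList = i :: w.toList := rfl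
        rw [delta, htl, deltaL_cons K X i w.toList hw]
        exact (lie_smul c (FreeLieAlgebra.of K i) (deltaL K X w.toList)).symm
      · simp
      · intro a b _ _ ha hb
        rw [mul_add, map_add, ha, hb, map_add, lie_add]
      · intro c a _ ha
        rw [mul_smul_comm, map_smul, ha, map_smul]
        exact (lie_smul c (FreeLieAlgebra.of K i) _).symm
  | h_zero => intro v hv; simp
  | h_add x y hx hy =>
      intro v hv
      rw [map_add, add_mul, map_add, hx v hv, hy v hv, add_lie]
  | h_smul c x hx =>
      intro v hv
      rw [map_smul, smul_mul_assoc, map_smul, hx v hv, smul_lie]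
  | h_lie x y hx hy =>
      intro v hv
      rw [LieHom.map_lie, Ring.lie_def, sub_mul, mul_assoc, mul_assoc, map_sub,
        hx _ (mul_mem_W K X _ hv), hy _ (mul_mem_W K X _ hv), hx v hv, hy v hv,
        lie_lie]

/-- Span of words of length `m`. -/
noncomputable def Bm (m : ℕ) : Submodule K (B K X) :=
  Submodule.span K {x | ∃ (w : FreeMonoid X) (c : K), FreeMonoid.length w = m ∧
    x = MonoidAlgebra.single w c}

lemma mul_mem_Bm {p q : ℕ} {x y : B K X} (hx : x ∈ Bm K X p) (hy : y ∈ Bm K X q) :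
    x * y ∈ Bm K X (p + q) := by
  refine Submodule.span_induction ?_ ?_ ?_ ?_ hx
  · rintro a ⟨w, c, hw, rfl⟩
    refine Submodule.span_induction ?_ ?_ ?_ ?_ hy
    · rintro b ⟨w', c', hw', rfl⟩
      rw [MonoidAlgebra.single_mul_single]
      exact Submodule.subset_span ⟨w * w', c * c', by rw [FreeMonoid.length_mul, hw, hw'], rfl⟩
    · simpa using (Bm K X (p + q)).zero_mem
    · intro a' b' _ _ ha hb
      rw [mul_add]; exact add_mem ha hb
    · intro k a' _ ha
      rw [mul_smul_comm]; exact Submodule.smul_mem _ _ ha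
  · simpa using (Bm K X (p + q)).zero_mem
  · intro a b _ _ ha hb
    rw [add_mul]; exact add_mem ha hb
  · intro k a _ ha
    rw [smul_mul_assoc]; exact Submodule.smul_mem _ _ ha

lemma Phi_eq_on_Bm {m : ℕ} {x : B K X} (hx : x ∈ Bm K X m) :
    Phi K X x = ((m : K))⁻¹ • phi K X x := by
  refine Submodule.span_induction ?_ ?_ ?_ ?_ hx
  · rintro a ⟨w, c, hw, rfl⟩
    rw [Phi_single, phi_single, hw, smul_comm]
  · simp
  · intro a b _ _ ha hb
    rw [map_add, map_add, ha, hb, smul_add]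
  · intro k a _ ha
    rw [map_smul, map_smul, ha, smul_comm]

/-- Homogeneous elements with the Dynkin–Specht–Wever property. -/
def Gset : Set (FreeLieAlgebra K X) :=
  {u | ∃ m : ℕ, 0 < m ∧ tau K X u ∈ Bm K X m ∧ phi K X (tau K X u) = (m : K) • u}

lemma of_mem_Gset (i : X) : FreeLieAlgebra.of K i ∈ Gset K X := by
  refine ⟨1, one_pos, ?_, ?_⟩
  · rw [tau, FreeLieAlgebra.lift_of_apply]
    exact Submodule.subset_span ⟨FreeMonoid.of i, 1, rfl, rfl⟩
  · rw [tau, FreeLieAlgebra.lift_of_apply, phi_single]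
    norm_num
    rfl

lemma lie_mem_Gset {u v : FreeLieAlgebra K X} (hu : u ∈ Gset K X) (hv : v ∈ Gset K X) :
    ⁅u, v⁆ ∈ Gset K X := by
  obtain ⟨p, hp, hBu, hpu⟩ := hu
  obtain ⟨q, hq, hBv, hpv⟩ := hv
  refine ⟨p + q, by omega, ?_, ?_⟩
  · rw [LieHom.map_lie, Ring.lie_def]
    refine sub_mem (mul_mem_Bm K X hBu hBv) ?_
    rw [add_comm]
    exact mul_mem_Bm K X hBv hBu
  · rw [LieHom.map_lie, Ring.lie_def, map_sub,
      phi_tau_mul K X u _ (tau_mem_W K X v), phi_tau_mul K X v _ (tau_mem_W K X u),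
      hpu, hpv]
    have h1 : ⁅u, (q : K) • v⁆ = (q : K) • ⁅u, v⁆ :=
      lie_smul (R := K) (L := FreeLieAlgebra K X) (M := FreeLieAlgebra K X) (q : K) u v
    have h2 : ⁅v, (p : K) • u⁆ = (p : K) • ⁅v, u⁆ :=
      lie_smul (R := K) (L := FreeLieAlgebra K X) (M := FreeLieAlgebra K X) (p : K) v u
    have hsk : ⁅v, u⁆ = -⁅u, v⁆ := by rw [← lie_skew]
    rw [h1, h2, hsk]
    push_cast
    module

lemma spanG_lie {x y : FreeLieAlgebra K X} (hx : x ∈ Submodule.span K (Gset K X))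
    (hy : y ∈ Submodule.span K (Gset K X)) : ⁅x, y⁆ ∈ Submodule.span K (Gset K X) := by
  refine Submodule.span_induction ?_ ?_ ?_ ?_ hx
  · intro a ha
    refine Submodule.span_induction ?_ ?_ ?_ ?_ hy
    · intro b hb
      exact Submodule.subset_span (lie_mem_Gset K X ha hb)
    · simpa using Submodule.zero_mem _
    · intro b c _ _ hb hc
      rw [lie_add]; exact add_mem hb hc
    · intro k b _ hb
      have hmem := Submodule.smul_mem (Submodule.span K (Gset K X)) k hb
      rw [← lie_smul (R := K) (L := FreeLieAlgebra K X) (M := FreeLieAlgebra K X) k a b] at hmem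
      exact hmem
  · simpa using Submodule.zero_mem _
  · intro a b _ _ ha hb
    rw [add_lie]; exact add_mem ha hb
  · intro k a _ ha
    have hmem := Submodule.smul_mem (Submodule.span K (Gset K X)) k ha
    rw [← smul_lie (R := K) (L := FreeLieAlgebra K X) (M := FreeLieAlgebra K X) k a y] at hmem
    exact hmem

lemma spanG_top : Submodule.span K (Gset K X) = ⊤ := by
  rw [eq_top_iff]
  rintro x -
  induction x using FLAux.induction with
  | h_of i => exact Submodule.subset_span (of_mem_Gset K X i)
  | h_zero => exact Submodule.zero_mem _
  | h_add a b ha hb => exact add_mem ha hb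
  | h_smul c a ha => exact Submodule.smul_mem _ _ ha
  | h_lie a b ha hb => exact spanG_lie K X ha hb

/-- The weighted Dynkin map is a retraction of `tau`. -/
theorem Phi_tau (a : FreeLieAlgebra K X) : Phi K X (tau K X a) = a := by
  have ha : a ∈ Submodule.span K (Gset K X) := by rw [spanG_top]; trivial
  refine Submodule.span_induction ?_ ?_ ?_ ?_ ha
  · rintro u ⟨m, hm, hB, hp⟩
    have hmK : (m : K) ≠ 0 := Nat.cast_ne_zero.mpr hm.ne'
    rw [Phi_eq_on_Bm K X hB, hp, smul_smul, inv_mul_cancel₀ hmK, one_smul]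
  · simp
  · intro a b _ _ ha hb
    rw [map_add, map_add, ha, hb]
  · intro k a _ ha
    rw [map_smul, map_smul, ha]

theorem tau_injective {a : FreeLieAlgebra K X} (h : tau K X a = 0) : a = 0 := by
  have := Phi_tau K X a
  rw [h, map_zero] at this
  exact this.symm

end FLAux


variable (K : Type) [Field K] [CharZero K]

lemma sMap_of (n : ℕ) (k : Fin n) :
    sMap K n (FreeLieAlgebra.of K k) = FreeLieAlgebra.of K k.succ :=
  FreeLieAlgebra.lift_of_apply _ _

lemma sMap_injective (n : ℕ) : Function.Injective (sMap K n) := by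
  let r : lieF K (n + 1) →ₗ⁅K⁆ lieF K n :=
    FreeLieAlgebra.lift K fun i : Fin (n + 1) =>
      Fin.cases 0 (fun k => FreeLieAlgebra.of K k) i
  have hr : ∀ y, r (sMap K n y) = y := by
    have hcomp : r.comp (sMap K n) = LieHom.id := by
      apply FreeLieAlgebra.hom_ext
      intro k
      simp only [LieHom.comp_apply, sMap, FreeLieAlgebra.lift_of_apply, r, LieHom.id_apply]
      exact Fin.cases_succ k
    intro y
    exact DFunLike.congr_fun hcomp y
  intro a b hab
  rw [← hr a, ← hr b, hab]

section

attribute [local instance] LieRing.ofAssociativeRing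

lemma bracket_x0_eq_zero {n : ℕ} {a : lieF K n}
    (h : ⁅x0 K n, sMap K n a⁆ = 0) : a = 0 := by
  set BN := FLAux.B K (Fin n) with hBN
  let T : Module.End K BN :=
    (MonoidAlgebra.lsingle (R := K) (1 : FreeMonoid (Fin n))).comp
      ((Finsupp.lapply (1 : FreeMonoid (Fin n))).comp (MonoidAlgebra.coeffLinearEquiv K).toLinearMap)
  let g : Fin (n + 1) → Module.End K BN :=
    fun i => Fin.cases T
      (fun k => Algebra.lmul K BN (MonoidAlgebra.single (FreeMonoid.of k) 1)) i
  let ρ : lieF K (n + 1) →ₗ⁅K⁆ Module.End K BN := FreeLieAlgebra.lift K g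
  have hρ0 : ρ (x0 K n) = T := by
    rw [x0, FreeLieAlgebra.lift_of_apply]
    exact Fin.cases_zero
  have hρs : ∀ y, ρ (sMap K n y) = Algebra.lmul K BN (FLAux.tau K (Fin n) y) := by
    have hcomp : ρ.comp (sMap K n) =
        ((Algebra.lmul K BN).toLieHom).comp (FLAux.tau K (Fin n)) := by
      apply FreeLieAlgebra.hom_ext
      intro k
      simp only [LieHom.comp_apply, sMap, FreeLieAlgebra.lift_of_apply, ρ,
        FLAux.tau, AlgHom.toLieHom_apply]
      exact Fin.cases_succ k
    intro y
    exact DFunLike.congr_fun hcomp y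
  have h2 : ⁅T, Algebra.lmul K BN (FLAux.tau K (Fin n) a)⁆ = 0 := by
    rw [← hρ0, ← hρs a, ← LieHom.map_lie, h, map_zero]
  have h3 : (⁅T, Algebra.lmul K BN (FLAux.tau K (Fin n) a)⁆ : Module.End K BN)
      (1 : BN) = 0 := by rw [h2]; rfl
  rw [Ring.lie_def, LinearMap.sub_apply, Module.End.mul_apply, Module.End.mul_apply] at h3
  have hL1 : Algebra.lmul K BN (FLAux.tau K (Fin n) a) (1 : BN) = FLAux.tau K (Fin n) a :=
    mul_one _
  have hT1 : T (1 : BN) = 1 := by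
    have h11 : ((1 : BN)).coeff (1 : FreeMonoid (Fin n)) = (1 : K) := by
      rw [MonoidAlgebra.one_def]; exact Finsupp.single_eq_same
    show MonoidAlgebra.single (1 : FreeMonoid (Fin n)) (((1 : BN)).coeff (1 : FreeMonoid (Fin n))) = (1 : BN)
    rw [h11, MonoidAlgebra.one_def]
  have hTtau : T (FLAux.tau K (Fin n) a) = 0 := by
    show MonoidAlgebra.single (1 : FreeMonoid (Fin n))
      ((FLAux.tau K (Fin n) a).coeff (1 : FreeMonoid (Fin n))) = 0
    rw [FLAux.coeff_one_eq_zero K (Fin n) (FLAux.tau_mem_W K (Fin n) a), MonoidAlgebra.single_zero]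
  rw [hL1, hT1, hTtau] at h3
  have htau : FLAux.tau K (Fin n) a = 0 := by
    rw [zero_sub, neg_eq_zero] at h3
    rw [← mul_one (FLAux.tau K (Fin n) a)]
    exact h3
  exact FLAux.tau_injective K (Fin n) htau

end

/-- With `λ : lie_n → Der(lie_{n+1})` sending `a` to the derivation with
`λ(a)(x_0) = [x_0, s(a)]` and `λ(a)(x_k) = 0` for `1 ≤ k ≤ n`:  for `a, b ∈ lie_n` and
tangential derivations `d, e` of `lie_n`,
`⁅λ(a) + d⁺, λ(b) + e⁺⁆ = λ([a,b] + d(b) - e(a)) + (⁅d,e⁆)⁺` in `Der(lie_{n+1})`.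
Moreover the map `(a, d) ↦ λ(a) + d⁺` is injective: if `λ(a) + w⁺ = 0` for any derivation
`w` of `lie_n`, then `a = 0` and `w = 0`. -/
theorem lambda_plus_bracket_and_injective (n : ℕ)
    (lam : lieF K n → DerL K (n + 1))
    (hlam0 : ∀ a : lieF K n, lam a (x0 K n) = ⁅x0 K n, sMap K n a⁆)
    (hlam : ∀ a : lieF K n, ∀ k : Fin n, lam a (FreeLieAlgebra.of K k.succ) = 0) :
    (∀ (a b : lieF K n) (d e : DerL K n)
      (ad : Fin n → lieF K n)
      (_ : ∀ k : Fin n, d (FreeLieAlgebra.of K k) = ⁅FreeLieAlgebra.of K k, ad k⁆)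
      (be : Fin n → lieF K n)
      (_ : ∀ k : Fin n, e (FreeLieAlgebra.of K k) = ⁅FreeLieAlgebra.of K k, be k⁆)
      (dp ep dep : DerL K (n + 1))
      (_ : dp (x0 K n) = 0) (_ : ∀ w : lieF K n, dp (sMap K n w) = sMap K n (d w))
      (_ : ep (x0 K n) = 0) (_ : ∀ w : lieF K n, ep (sMap K n w) = sMap K n (e w))
      (_ : dep (x0 K n) = 0)
      (_ : ∀ w : lieF K n, dep (sMap K n w) = sMap K n (⁅d, e⁆ w)),
      ⁅lam a + dp, lam b + ep⁆ = lam (⁅a, b⁆ + d b - e a) + dep) ∧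
    (∀ (a : lieF K n) (w : DerL K n) (wp : DerL K (n + 1)),
      wp (x0 K n) = 0 → (∀ y : lieF K n, wp (sMap K n y) = sMap K n (w y)) →
      lam a + wp = 0 → a = 0 ∧ w = 0) := by
  have hlamS : ∀ (c : lieF K n) (y : lieF K n), lam c (sMap K n y) = 0 := by
    intro c y
    induction y using FLAux.induction with
    | h_of i => rw [sMap_of]; exact hlam c i
    | h_zero => rw [map_zero, map_zero]
    | h_add x y hx hy => rw [map_add, map_add, hx, hy, add_zero]
    | h_smul k x hx => rw [map_smul, map_smul, hx, smul_zero]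
    | h_lie x y hx hy =>
        rw [LieHom.map_lie, LieDerivation.apply_lie_eq_add, hx, hy, zero_lie, lie_zero, add_zero]
  constructor
  · intro a b d e ad _ be _ dp ep dep hdp0 hdps hep0 heps hdep0 hdeps
    have h1 : (lam a + dp) (x0 K n) = ⁅x0 K n, sMap K n a⁆ := by
      rw [LieDerivation.add_apply, hlam0, hdp0, add_zero]
    have h2 : (lam b + ep) (x0 K n) = ⁅x0 K n, sMap K n b⁆ := by
      rw [LieDerivation.add_apply, hlam0, hep0, add_zero]
    have h3 : ∀ y, (lam a + dp) (sMap K n y) = sMap K n (d y) := fun y => by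
      rw [LieDerivation.add_apply, hlamS, hdps, zero_add]
    have h4 : ∀ y, (lam b + ep) (sMap K n y) = sMap K n (e y) := fun y => by
      rw [LieDerivation.add_apply, hlamS, heps, zero_add]
    have jac : ∀ (x A B : lieF K (n + 1)),
        ⁅⁅x, A⁆, B⁆ - ⁅⁅x, B⁆, A⁆ = ⁅x, ⁅A, B⁆⁆ := by
      intro x A B
      have hskk : ⁅⁅x, B⁆, A⁆ = -⁅A, ⁅x, B⁆⁆ := by
        rw [← lie_skew A ⁅x, B⁆, neg_neg]
      rw [leibniz_lie x A B, hskk]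
      abel
    apply LieDerivation.ext_of_lieSpan_eq_top _ (FLAux.lieSpan_top K (Fin (n + 1)))
    rintro z ⟨i, rfl⟩
    induction i using Fin.cases with
    | zero =>
        show ⁅lam a + dp, lam b + ep⁆ (x0 K n)
          = (lam (⁅a, b⁆ + d b - e a) + dep) (x0 K n)
        rw [LieDerivation.commutator_apply, h1, h2,
          LieDerivation.apply_lie_eq_add, LieDerivation.apply_lie_eq_add, h1, h2, h3, h4,
          LieDerivation.add_apply, hlam0, hdep0, add_zero, map_sub, map_add,
          LieHom.map_lie, lie_sub, lie_add, ← jac (x0 K n) (sMap K n a) (sMap K n b)]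
        abel
    | succ k =>
        show ⁅lam a + dp, lam b + ep⁆ (FreeLieAlgebra.of K k.succ)
          = (lam (⁅a, b⁆ + d b - e a) + dep) (FreeLieAlgebra.of K k.succ)
        rw [LieDerivation.commutator_apply, ← sMap_of K n k, h4, h3, h3, h4,
          LieDerivation.add_apply, hlamS, hdeps, zero_add,
          LieDerivation.commutator_apply, map_sub]
  · intro a w wp hwp0 hwps h
    have hx0 : ⁅x0 K n, sMap K n a⁆ = 0 := by
      have hh := LieDerivation.congr_fun h (x0 K n)
      rw [LieDerivation.add_apply, hlam0, hwp0, add_zero, LieDerivation.zero_apply] at hh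
      exact hh
    have ha : a = 0 := bracket_x0_eq_zero K hx0
    refine ⟨ha, ?_⟩
    apply LieDerivation.ext
    intro y
    have h5 := LieDerivation.congr_fun h (sMap K n y)
    rw [LieDerivation.add_apply, hlamS, hwps, zero_add, LieDerivation.zero_apply] at h5
    rw [LieDerivation.zero_apply]
    exact sMap_injective K n (by rw [h5, map_zero])
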